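/- For a, b ∈ [-1,1] with a ≠ b and a ≠ -b, the two-dimensional evolution algebras E⁺_a and E⁺_b with structural constant matrices [[a, √(1-a²)],[-√(1-a²), a]] and [[b, √(1-b²)],[-√(1-b²), b]] respectively are not isomorphic as ℝ-algebras. -/

import Mathlib

/-- Multiplication of the 2-dimensional evolution algebra `E⁺_a` on `ℝ × ℝ`:
`e₁² = a e₁ + √(1-a²) e₂`, `e₂² = -√(1-a²) e₁ + a e₂`, `e₁e₂ = 0`. -/
noncomputable def Emul (a : ℝ) (x y : ℝ × ℝ) : ℝ × ℝ :=
  (a * (x.1 * y.1) - Real.sqrt (1 - a ^ 2) * (x.2 * y.2),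
    Real.sqrt (1 - a ^ 2) * (x.1 * y.1) + a * (x.2 * y.2))

set_option maxHeartbeats 1000000 in
theorem Eplus_not_isomorphic (a b : ℝ) (ha : a ∈ Set.Icc (-1 : ℝ) 1)
    (hb : b ∈ Set.Icc (-1 : ℝ) 1) (hab : a ≠ b) (hab' : a ≠ -b) :
    ¬ ∃ f : (ℝ × ℝ) ≃ₗ[ℝ] (ℝ × ℝ),
      ∀ x y : ℝ × ℝ, f (Emul a x y) = Emul b (f x) (f y) := by
  rintro ⟨f, hf⟩
  obtain ⟨ha1, ha2⟩ := ha
  obtain ⟨hb1, hb2⟩ := hb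
  set sa := Real.sqrt (1 - a ^ 2) with hsa
  set sb := Real.sqrt (1 - b ^ 2) with hsb
  have hsa2 : sa ^ 2 = 1 - a ^ 2 := Real.sq_sqrt (by nlinarith)
  have hsb2 : sb ^ 2 = 1 - b ^ 2 := Real.sq_sqrt (by nlinarith)
  set p := (f (1, 0)).1 with hp
  set r := (f (1, 0)).2 with hr
  set q := (f (0, 1)).1 with hq
  set s := (f (0, 1)).2 with hs
  have hfe1 : f (1, 0) = (p, r) := rfl
  have hfe2 : f (0, 1) = (q, s) := rfl
  have hlin : ∀ u v : ℝ, f (u, v) = (u * p + v * q, u * r + v * s) := by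
    intro u v
    have : (u, v) = u • ((1 : ℝ), (0 : ℝ)) + v • ((0 : ℝ), (1 : ℝ)) := by
      simp [Prod.ext_iff]
    rw [this, map_add, map_smul, map_smul, hfe1, hfe2]
    simp [Prod.ext_iff, mul_comm]
  -- e1 * e2 = 0
  have h12 := hf (1, 0) (0, 1)
  simp only [Emul, hfe1, hfe2] at h12
  norm_num at h12
  rw [← hsb] at h12
  simp [Prod.ext_iff, eq_comm, Prod.mk_zero_zero] at h12
  obtain ⟨h12a, h12b⟩ := h12
  -- derive pq = 0, rs = 0
  have hpq : p * q = 0 := by linear_combination (-b) * h12a + (-sb) * h12b - p * q * hsb2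
  have hrs : r * s = 0 := by linear_combination sb * h12a - b * h12b - r * s * hsb2
  -- e1 * e1
  have h11 := hf (1, 0) (1, 0)
  simp only [Emul, hfe1, hfe2] at h11
  norm_num at h11
  rw [← hsa, ← hsb, hlin a sa] at h11
  rw [Prod.ext_iff] at h11
  obtain ⟨A1, A2⟩ := h11
  simp only at A1 A2
  -- e2 * e2
  have h22 := hf (0, 1) (0, 1)
  simp only [Emul, hfe1, hfe2] at h22
  norm_num at h22
  rw [← hsa, ← hsb, hlin (-sa) a] at h22
  rw [Prod.ext_iff] at h22
  obtain ⟨B1, B2⟩ := h22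
  simp only at B1 B2
  -- f e1 ≠ 0 and f e2 ≠ 0
  have hfe1ne : ¬(p = 0 ∧ r = 0) := by
    rintro ⟨h1, h2⟩
    have h0 : f (1, 0) = 0 := by rw [hfe1, h1, h2]; rfl
    have := f.map_eq_zero_iff.mp h0
    simp [Prod.ext_iff] at this
  have hfe2ne : ¬(q = 0 ∧ s = 0) := by
    rintro ⟨h1, h2⟩
    have h0 : f (0, 1) = 0 := by rw [hfe2, h1, h2]; rfl
    have := f.map_eq_zero_iff.mp h0
    simp [Prod.ext_iff] at this
  clear hf hlin hfe1 hfe2 h12a h12b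
  clear_value sa sb p r q s
  clear hsa hsb hp hr hq hs f
  rcases mul_eq_zero.mp hpq with hP | hQ
  · rcases mul_eq_zero.mp hrs with hR | hS
    · exact hfe1ne ⟨hP, hR⟩
    · -- antidiagonal: p = 0, s = 0, q ≠ 0, r ≠ 0
      have hqne : q ≠ 0 := fun h => hfe2ne ⟨h, hS⟩
      have hrne : r ≠ 0 := fun h => hfe1ne ⟨hP, h⟩
      simp only [hP, hS] at A1 A2 B1 B2
      have har : a = b * r := by
        have := mul_right_cancel₀ hrne (by nlinarith [A2] : a * r = (b * r) * r)
        linarith [this]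
      have haq : a = b * q := by
        have := mul_right_cancel₀ hqne (by nlinarith [B1] : a * q = (b * q) * q)
        linarith [this]
      by_cases hbz : b = 0
      · exact hab (by rw [hbz] at haq ⊢; linarith)
      · have hqr : q = r := by
          have : b * q = b * r := by rw [← haq, ← har]
          exact mul_left_cancel₀ hbz this
        rw [hqr] at A1
        have hsaq : sa = -sb * r := by
          have h1 : sa * r = (-sb * r) * r := by nlinarith [A1]
          exact mul_right_cancel₀ hrne h1
        have h1 : 1 - a ^ 2 = (1 - b ^ 2) * r ^ 2 := by
          rw [← hsa2, hsaq, ← hsb2]; ring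
        have h2 : a ^ 2 = b ^ 2 * r ^ 2 := by rw [har]; ring
        have hr1 : r ^ 2 = 1 := by nlinarith [h1, h2]
        have hbr : b ^ 2 * r ^ 2 = b ^ 2 := by rw [hr1]; ring
        have hab2 : a ^ 2 = b ^ 2 := by linarith [h2, hbr]
        have hz : (a - b) * (a + b) = 0 := by linear_combination hab2
        rcases mul_eq_zero.mp hz with h | h
        · exact hab (by linarith)
        · exact hab' (by linarith)
  · rcases mul_eq_zero.mp hrs with hR | hS
    · -- diagonal: q = 0, r = 0, p ≠ 0, s ≠ 0
      have hpne : p ≠ 0 := fun h => hfe1ne ⟨h, hR⟩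
      have hsne : s ≠ 0 := fun h => hfe2ne ⟨hQ, h⟩
      simp only [hQ, hR] at A1 A2 B1 B2
      have hap : a = b * p := by
        have := mul_right_cancel₀ hpne (by nlinarith [A1] : a * p = (b * p) * p)
        linarith [this]
      have has : a = b * s := by
        have := mul_right_cancel₀ hsne (by nlinarith [B2] : a * s = (b * s) * s)
        linarith [this]
      by_cases hbz : b = 0
      · exact hab (by rw [hbz] at hap ⊢; linarith)
      · have hps : p = s := by
          have : b * p = b * s := by rw [← hap, ← has]
          exact mul_left_cancel₀ hbz this
        rw [hps] at A2
        have hsas : sa = sb * s := by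
          have h1 : sa * s = (sb * s) * s := by nlinarith [A2]
          exact mul_right_cancel₀ hsne h1
        have h1 : 1 - a ^ 2 = (1 - b ^ 2) * s ^ 2 := by
          rw [← hsa2, hsas, ← hsb2]; ring
        have h2 : a ^ 2 = b ^ 2 * s ^ 2 := by rw [has]; ring
        have hs1 : s ^ 2 = 1 := by nlinarith [h1, h2]
        have hbs : b ^ 2 * s ^ 2 = b ^ 2 := by rw [hs1]; ring
        have hab2 : a ^ 2 = b ^ 2 := by linarith [h2, hbs]
        have hz : (a - b) * (a + b) = 0 := by linear_combination hab2
        rcases mul_eq_zero.mp hz with h | h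
        · exact hab (by linarith)
        · exact hab' (by linarith)
    · exact hfe2ne ⟨hQ, hS⟩
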